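/- A pair (I, C_y) of m×m matrices over GF(2), with I the identity, is progressive if and only if every shifted leading minor of C_y is nonzero, where a shifted leading minor is the determinant of the submatrix formed by the first r rows and r consecutive columns, for any r. -/

import Mathlib

open Matrix

/-- The binary Pascal matrix over GF(2): entries C(j-1, i-1) mod 2 (1-indexed),
i.e. C(j, i) with 0-indexed `Fin`. -/
def pascal (m : ℕ) : Matrix (Fin m) (Fin m) (ZMod 2) :=
  fun i j => (Nat.choose j.val i.val : ZMod 2)

/-- The anti-diagonal matrix over GF(2), with ones on the anti-diagonal. -/
def antiDiag (m : ℕ) : Matrix (Fin m) (Fin m) (ZMod 2) :=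
  fun i j => if i.val + j.val + 1 = m then 1 else 0
/-- The hybrid matrix whose first `m - r` rows are the first `m - r` rows of `Cx`
and whose last `r` rows are the first `r` rows of `Cy`. -/
def hybrid (m r : ℕ) (Cx Cy : Matrix (Fin m) (Fin m) (ZMod 2)) :
    Matrix (Fin m) (Fin m) (ZMod 2) :=
  fun i j =>
    if i.val < m - r then Cx i j
    else Cy ⟨i.val - (m - r), Nat.lt_of_le_of_lt (Nat.sub_le _ _) i.isLt⟩ j

/-- A dyadic pair: all hybrid matrices are invertible. -/
def DyadicPair {m : ℕ} (Cx Cy : Matrix (Fin m) (Fin m) (ZMod 2)) : Prop :=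
  ∀ r ≤ m, (hybrid m r Cx Cy).det ≠ 0
/-- A progressive pair: for all `r ≤ k ≤ m`, the hybrid matrix built from the
leading `k × k` blocks of `Cx` and `Cy` is invertible. -/
def ProgressivePair {m : ℕ} (Cx Cy : Matrix (Fin m) (Fin m) (ZMod 2)) : Prop :=
  ∀ k, ∀ hk : k ≤ m, ∀ r ≤ k,
    (hybrid k r (Cx.submatrix (Fin.castLE hk) (Fin.castLE hk))
                (Cy.submatrix (Fin.castLE hk) (Fin.castLE hk))).det ≠ 0
/-- A shifted leading minor: the determinant of the submatrix formed by the
first `r` rows and the `r` consecutive columns `j+1, ..., j+r` (1-indexed). -/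
def shiftedMinor {m : ℕ} (C : Matrix (Fin m) (Fin m) (ZMod 2)) (r j : ℕ)
    (h : j + r ≤ m) : ZMod 2 :=
  (C.submatrix
    (fun i : Fin r => (⟨i.val, lt_of_lt_of_le i.isLt (le_trans (Nat.le_add_left r j) h)⟩ : Fin m))
    (fun i : Fin r => (⟨j + i.val, lt_of_lt_of_le (Nat.add_lt_add_left i.isLt j) h⟩ : Fin m))).det


lemma shiftedMinor_congr {m : ℕ} (C : Matrix (Fin m) (Fin m) (ZMod 2)) {r j j' : ℕ}
    (hj : j = j') (h : j + r ≤ m) :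
    shiftedMinor C r j h = shiftedMinor C r j' (hj ▸ h) := by subst hj; rfl

lemma hybrid_one_det {m : ℕ} (Cy : Matrix (Fin m) (Fin m) (ZMod 2)) (k r : ℕ)
    (hk : k ≤ m) (hr : r ≤ k) :
    (hybrid k r ((1 : Matrix (Fin m) (Fin m) (ZMod 2)).submatrix (Fin.castLE hk) (Fin.castLE hk))
      (Cy.submatrix (Fin.castLE hk) (Fin.castLE hk))).det
    = shiftedMinor Cy r (k - r) (by omega) := by
  have hkr : (k - r) + r = k := by omega
  let e : Fin (k - r) ⊕ Fin r ≃ Fin k := finSumFinEquiv.trans (finCongr hkr)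
  rw [← Matrix.det_submatrix_equiv_self e]
  have heq : (hybrid k r ((1 : Matrix (Fin m) (Fin m) (ZMod 2)).submatrix (Fin.castLE hk) (Fin.castLE hk))
      (Cy.submatrix (Fin.castLE hk) (Fin.castLE hk))).submatrix e e =
      Matrix.fromBlocks 1 0
        (Matrix.of fun (i : Fin r) (j : Fin (k - r)) => Cy ⟨i.val, by omega⟩ ⟨j.val, by omega⟩)
        (Matrix.of fun (i : Fin r) (j : Fin r) => Cy ⟨i.val, by omega⟩ ⟨(k - r) + j.val, by omega⟩) := by
    ext i j
    cases i with
    | inl i =>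
      cases j with
      | inl j =>
        simp [hybrid, e, Matrix.one_apply, Matrix.fromBlocks, Fin.ext_iff, i.isLt]
      | inr j =>
        have : ¬ (i.val : ℕ) = (k - r) + j.val := by omega
        simp [hybrid, e, Matrix.one_apply, Matrix.fromBlocks, Fin.ext_iff, i.isLt, this]
    | inr i =>
      have h1 : ¬ ((k - r) + i.val < k - r) := by omega
      cases j with
      | inl j =>
        simp [hybrid, e, Matrix.fromBlocks, h1, Fin.castLE]
      | inr j =>
        simp [hybrid, e, Matrix.fromBlocks, h1, Fin.castLE]
  rw [heq, Matrix.det_fromBlocks_zero₁₂, Matrix.det_one, one_mul]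
  unfold shiftedMinor
  congr 1

/-- `(I, C_y)` is a progressive pair iff all shifted leading minors of `C_y`
are nonzero. -/
theorem progressivePair_one_iff (m : ℕ) (Cy : Matrix (Fin m) (Fin m) (ZMod 2)) :
    ProgressivePair 1 Cy ↔
      ∀ r j, ∀ h : j + r ≤ m, shiftedMinor Cy r j h ≠ 0 := by
  constructor
  · intro H r j h
    have hr : r ≤ j + r := Nat.le_add_left r j
    have := H (j + r) h r hr
    rw [hybrid_one_det Cy (j + r) r h hr,
        shiftedMinor_congr Cy (show j + r - r = j by omega)] at this
    exact this
  · intro H k hk r hr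
    rw [hybrid_one_det Cy k r hk hr]
    exact H r (k - r) _
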